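/- Let L̂ : BUC_η → ℝⁿ be a bounded linear map and let λ ∈ ℂ with Re(λ) > -η. Then λ is an eigenvalue of the operator (A+L)₀ (equivalently, there exists a nonzero φ ∈ BUC_η¹ with φ' = λφ on (-∞,0] and φ'(0) = L̂(φ)) if and only if det(Δ(λ)) = 0, where Δ(λ) = λI - L̂(e^{λ·}I) ∈ M_n(ℂ) is the characteristic matrix obtained by applying L̂ columnwise to the functions θ ↦ e^{λθ} eⱼ. -/

import Mathlib

open Set Filter Topology

noncomputable def etaNorm (η : ℝ) {F : Type*} [NormedAddCommGroup F] (φ : ℝ → F) : ℝ :=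
  sSup ((fun θ => Real.exp (η * θ) * ‖φ θ‖) '' Set.Iic 0)

def BUCmem (η : ℝ) {F : Type*} [NormedAddCommGroup F] [NormedSpace ℝ F] (φ : ℝ → F) : Prop :=
  ContinuousOn φ (Set.Iic 0) ∧
  BddAbove ((fun θ => Real.exp (η * θ) * ‖φ θ‖) '' Set.Iic 0) ∧
  UniformContinuousOn (fun θ => Real.exp (η * θ) • φ θ) (Set.Iic 0)

def BUC1mem (η : ℝ) {F : Type*} [NormedAddCommGroup F] [NormedSpace ℝ F] (φ φ' : ℝ → F) : Prop :=
  BUCmem η φ ∧ BUCmem η φ' ∧ ∀ θ ≤ (0:ℝ), HasDerivWithinAt φ (φ' θ) (Set.Iic 0) θ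

open Matrix

/-- The characteristic matrix `Δ(λ) = λI - L̂(e^{λ·}I)`, whose `j`-th column is obtained by
applying `L̂` to the function `θ ↦ e^{λθ} e_j`. -/
noncomputable def charMatrix {n : ℕ} (Lhat : (ℝ → (Fin n → ℂ)) →ₗ[ℂ] (Fin n → ℂ))
    (z : ℂ) : Matrix (Fin n) (Fin n) ℂ :=
  Matrix.of fun i j =>
    (if i = j then z else 0) -
      Lhat (fun θ => fun k => if k = j then Complex.exp (z * θ) else 0) i

lemma aux_hasDerivAt_cexp (c : ℂ) (θ : ℝ) :
    HasDerivAt (fun θ : ℝ => Complex.exp (c * θ)) (c * Complex.exp (c * θ)) θ := by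
  have h1 : HasDerivAt (fun θ : ℝ => (θ : ℂ)) 1 θ := by
    simpa using (hasDerivAt_id θ).ofReal_comp
  have h2 : HasDerivAt (fun θ : ℝ => c * (θ : ℂ)) c θ := by
    simpa using h1.const_mul c
  simpa [mul_comm] using h2.cexp

lemma aux_hasDerivAt_cexp_smul {n : ℕ} (c : ℂ) (w : Fin n → ℂ) (θ : ℝ) :
    HasDerivAt (fun θ : ℝ => Complex.exp (c * θ) • w)
      ((c * Complex.exp (c * θ)) • w) θ :=
  (aux_hasDerivAt_cexp c θ).smul_const w

lemma aux_norm_exp_smul {n : ℕ} (z : ℂ) (θ : ℝ) (w : Fin n → ℂ) :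
    ‖Complex.exp (z * θ) • w‖ = Real.exp (z.re * θ) * ‖w‖ := by
  rw [norm_smul, Complex.norm_exp]
  congr 2
  simp [Complex.mul_re]

lemma aux_buc {n : ℕ} (η : ℝ) (z : ℂ) (hz : 0 < η + z.re) (w : Fin n → ℂ) :
    BUCmem η (fun θ : ℝ => Complex.exp (z * θ) • w) := by
  have hcont : Continuous (fun θ : ℝ => Complex.exp (z * θ) • w) :=
    ((Complex.continuous_exp.comp (continuous_const.mul Complex.continuous_ofReal)).smul
      continuous_const)
  have heq : ∀ θ : ℝ, Real.exp (η * θ) • Complex.exp (z * θ) • w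
      = Complex.exp ((↑η + z) * θ) • w := by
    intro θ
    rw [← smul_assoc]
    congr 1
    show (Real.exp (η * θ) : ℂ) • Complex.exp (z * θ) = _
    rw [smul_eq_mul]
    push_cast
    rw [← Complex.exp_add]
    ring_nf
  refine ⟨hcont.continuousOn, ⟨‖w‖, ?_⟩, ?_⟩
  · rintro x ⟨θ, hθ, rfl⟩
    simp only
    rw [aux_norm_exp_smul, ← mul_assoc, ← Real.exp_add]
    have h1 : Real.exp (η * θ + z.re * θ) ≤ 1 := by
      rw [Real.exp_le_one_iff]
      have he : η * θ + z.re * θ = (η + z.re) * θ := by ring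
      rw [he]
      exact mul_nonpos_of_nonneg_of_nonpos hz.le (mem_Iic.mp hθ)
    calc Real.exp (η * θ + z.re * θ) * ‖w‖ ≤ 1 * ‖w‖ :=
          mul_le_mul_of_nonneg_right h1 (norm_nonneg w)
      _ = ‖w‖ := one_mul _
  · have hfe : (fun θ : ℝ => Real.exp (η * θ) • Complex.exp (z * θ) • w)
        = fun θ : ℝ => Complex.exp (((η:ℂ) + z) * θ) • w := funext heq
    rw [hfe]
    have hlip : LipschitzOnWith (‖((η:ℂ) + z)‖₊ * ‖w‖₊)
        (fun θ : ℝ => Complex.exp (((η:ℂ) + z) * θ) • w) (Iic 0) := by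
      apply (convex_Iic (0:ℝ)).lipschitzOnWith_of_nnnorm_hasDerivWithin_le
        (f' := fun θ : ℝ => (((η:ℂ) + z) * Complex.exp (((η:ℂ) + z) * θ)) • w)
        (fun θ _ => (aux_hasDerivAt_cexp_smul ((η:ℂ) + z) w θ).hasDerivWithinAt)
      intro θ hθ
      rw [← NNReal.coe_le_coe]
      push_cast
      rw [norm_smul, norm_mul, Complex.norm_exp]
      have h1 : Real.exp ((((η:ℂ) + z) * ↑θ).re) ≤ 1 := by
        rw [Real.exp_le_one_iff]
        have he : (((η:ℂ) + z) * ↑θ).re = (η + z.re) * θ := by simp [Complex.mul_re]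
        rw [he]
        exact mul_nonpos_of_nonneg_of_nonpos hz.le (mem_Iic.mp hθ)
      calc ‖((η:ℂ) + z)‖ * Real.exp ((((η:ℂ) + z) * ↑θ).re) * ‖w‖
          ≤ ‖((η:ℂ) + z)‖ * 1 * ‖w‖ := by gcongr
        _ = ‖((η:ℂ) + z)‖ * ‖w‖ := by ring
    exact hlip.uniformContinuousOn

lemma aux_hlin {n : ℕ} (Lhat : (ℝ → (Fin n → ℂ)) →ₗ[ℂ] (Fin n → ℂ)) (z : ℂ)
    (w : Fin n → ℂ) :
    Lhat (fun θ => Complex.exp (z * θ) • w)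
      = ∑ j, w j • Lhat (fun θ k => if k = j then Complex.exp (z * θ) else 0) := by
  have hfun : (fun θ : ℝ => Complex.exp (z * θ) • w)
      = ∑ j, w j • (fun θ : ℝ => fun k => if k = j then Complex.exp (z * θ) else 0) := by
    funext θ k
    simp [Finset.sum_apply, Pi.smul_apply, smul_eq_mul, mul_ite, mul_zero,
      Finset.sum_ite_eq', mul_comm]
  rw [hfun, map_sum]
  congr 1
  funext j
  rw [LinearMap.map_smul]

lemma aux_mulVec {n : ℕ} (Lhat : (ℝ → (Fin n → ℂ)) →ₗ[ℂ] (Fin n → ℂ)) (z : ℂ)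
    (w : Fin n → ℂ) :
    (charMatrix Lhat z).mulVec w
      = z • w - Lhat (fun θ => Complex.exp (z * θ) • w) := by
  funext i
  rw [Pi.sub_apply, aux_hlin]
  simp only [charMatrix, Matrix.mulVec, dotProduct, Matrix.of_apply, sub_mul,
    Finset.sum_sub_distrib, ite_mul, zero_mul, Finset.sum_ite_eq, Finset.mem_univ, if_true,
    Pi.smul_apply, smul_eq_mul, Finset.sum_apply]
  ring_nf
  congr 1
  exact Finset.sum_congr rfl fun j _ => by ring

theorem characteristic_equation (η : ℝ) (hη : 0 < η) (n : ℕ) (hn : 1 ≤ n)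
    (Lhat : (ℝ → (Fin n → ℂ)) →ₗ[ℂ] (Fin n → ℂ))
    (hbd : ∃ C : ℝ, ∀ φ : ℝ → (Fin n → ℂ), BUCmem η φ → ‖Lhat φ‖ ≤ C * etaNorm η φ)
    (hsupp : ∀ φ ψ : ℝ → (Fin n → ℂ), (∀ θ ≤ (0:ℝ), φ θ = ψ θ) → Lhat φ = Lhat ψ)
    (z : ℂ) (hz : -η < z.re) :
    (∃ φ : ℝ → (Fin n → ℂ), (∃ θ ≤ (0:ℝ), φ θ ≠ 0) ∧
        BUC1mem η φ (fun θ => z • φ θ) ∧ z • φ 0 = Lhat φ) ↔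
      (charMatrix Lhat z).det = 0 := by
  have hηz : 0 < η + z.re := by linarith
  rw [← Matrix.exists_mulVec_eq_zero_iff]
  constructor
  · rintro ⟨φ, ⟨θ0, hθ0, hφθ0⟩, ⟨hb1, hb2, hder⟩, heig⟩
    have key : ∀ θ ≤ (0:ℝ), φ θ = Complex.exp (z * θ) • φ 0 := by
      intro θ hθ
      set ψ : ℝ → Fin n → ℂ := fun θ => Complex.exp (-z * θ) • φ θ with hψdef
      have hψder : ∀ t ∈ Iic (0:ℝ),
          HasDerivWithinAt ψ ((fun _ : ℝ => (0 : Fin n → ℂ)) t) (Iic 0) t := by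
        intro t ht
        have h1 := ((aux_hasDerivAt_cexp (-z) t).hasDerivWithinAt).smul (hder t ht)
        have h2 : Complex.exp (-z * ↑t) • ((fun θ => z • φ θ) t)
            + (-z * Complex.exp (-z * ↑t)) • φ t = (0 : Fin n → ℂ) := by
          simp only [smul_smul]
          rw [← add_smul]
          have h3 : Complex.exp (-z * ↑t) * z + -z * Complex.exp (-z * ↑t) = 0 := by ring
          rw [h3, zero_smul]
        rw [h2] at h1
        exact h1
      have hcst : ψ θ = ψ 0 := by
        have hb := (convex_Iic (0:ℝ)).norm_image_sub_le_of_norm_hasDerivWithin_le (C := 0) hψder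
          (fun t _ => by simp) (mem_Iic.mpr le_rfl) (mem_Iic.mpr hθ)
        exact sub_eq_zero.mp (norm_le_zero_iff.mp (by simpa using hb))
      have h3 : Complex.exp (-z * θ) • φ θ = φ 0 := by
        have h0 : ψ 0 = φ 0 := by simp [hψdef]
        rw [← h0]; exact hcst
      calc φ θ = (Complex.exp (z * θ) * Complex.exp (-z * θ)) • φ θ := by
            rw [← Complex.exp_add]
            have h4 : z * ↑θ + -z * ↑θ = 0 := by ring
            rw [h4, Complex.exp_zero, one_smul]
        _ = Complex.exp (z * θ) • (Complex.exp (-z * θ) • φ θ) := by rw [mul_smul]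
        _ = Complex.exp (z * θ) • φ 0 := by rw [h3]
    refine ⟨φ 0, fun h0 => hφθ0 (by rw [key θ0 hθ0, h0, smul_zero]), ?_⟩
    rw [aux_mulVec]
    have hL : Lhat (fun θ => Complex.exp (z * ↑θ) • φ 0) = Lhat φ :=
      hsupp _ _ (fun θ hθ => (key θ hθ).symm)
    rw [hL, ← heig, sub_self]
  · rintro ⟨v, hv, hmv⟩
    refine ⟨fun θ => Complex.exp (z * θ) • v, ⟨0, le_rfl, by simpa using hv⟩, ?_, ?_⟩
    · refine ⟨aux_buc η z hηz v, ?_, ?_⟩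
      · have hfe : (fun θ : ℝ => z • Complex.exp (z * θ) • v)
            = fun θ : ℝ => Complex.exp (z * θ) • (z • v) := by
          funext θ; rw [smul_comm]
        rw [hfe]
        exact aux_buc η z hηz (z • v)
      · intro θ hθ
        have hd := (aux_hasDerivAt_cexp_smul z v θ).hasDerivWithinAt (s := Iic 0)
        simpa [smul_smul] using hd
    · have h := aux_mulVec Lhat z v
      rw [hmv] at h
      have h2 : z • v = Lhat (fun θ => Complex.exp (z * ↑θ) • v) := sub_eq_zero.mp h.symm
      simpa using h2
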